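/- arXiv:1310.1004 — 2 statements merged into one kernel-verified Lean document; each statement's English description precedes it below -/
import Mathlib

section
/- For n ≥ 4, the number of isomorphism classes of Möbius n-pairs 𝔐_{(n,φ)}, where φ ranges over all permutations of {1,…,n}, equals the number p(n) of partitions of the positive integer n. -/
abbrev MPoint (n : ℕ) := Fin n ⊕ Fin n

/-- The block `A_i = (A \ {a_i}) ∪ {b_i}`. -/
def Ablock (n : ℕ) (i : Fin n) : Set (MPoint n) :=
  Sum.inl '' {j | j ≠ i} ∪ {Sum.inr i}

/-- The block `B_i = (B \ {b_i}) ∪ {a_{φ(i)}}`. -/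
def Bblock (n : ℕ) (φ : Equiv.Perm (Fin n)) (i : Fin n) : Set (MPoint n) :=
  Sum.inr '' {j | j ≠ i} ∪ {Sum.inl (φ i)}

def ABlocks (n : ℕ) : Set (Set (MPoint n)) := Set.range (Ablock n)

def BBlocks (n : ℕ) (φ : Equiv.Perm (Fin n)) : Set (Set (MPoint n)) := Set.range (Bblock n φ)

/-- The blocks of the Möbius `n`-pair `𝔐_{(n,φ)}`; its point set is all of `MPoint n`. -/
def MBlocks (n : ℕ) (φ : Equiv.Perm (Fin n)) : Set (Set (MPoint n)) :=
  ABlocks n ∪ BBlocks n φ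

/-- Two Möbius n-pairs are isomorphic configurations. -/
def MIso (n : ℕ) (φ ψ : Equiv.Perm (Fin n)) : Prop :=
  ∃ f : MPoint n ≃ MPoint n,
    ∀ S : Set (MPoint n), S ∈ MBlocks n φ ↔ ⇑f '' S ∈ MBlocks n ψ

namespace MPair

variable {n : ℕ} {φ ψ : Equiv.Perm (Fin n)}

@[simp] lemma inl_mem_Ablock {j i : Fin n} : Sum.inl j ∈ Ablock n i ↔ j ≠ i := by
  simp [Ablock]

@[simp] lemma inr_mem_Ablock {j i : Fin n} : Sum.inr j ∈ Ablock n i ↔ j = i := by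
  simp [Ablock]

@[simp] lemma inl_mem_Bblock {j i : Fin n} : Sum.inl j ∈ Bblock n φ i ↔ j = φ i := by
  simp [Bblock]

@[simp] lemma inr_mem_Bblock {j i : Fin n} : Sum.inr j ∈ Bblock n φ i ↔ j ≠ i := by
  simp [Bblock]

/-- The blocks indexed by `Fin n ⊕ Fin n`. -/
def blk (n : ℕ) (φ : Equiv.Perm (Fin n)) : Fin n ⊕ Fin n → Set (MPoint n) :=
  Sum.elim (Ablock n) (Bblock n φ)

@[simp] lemma blk_inl {i : Fin n} : blk n φ (Sum.inl i) = Ablock n i := rfl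
@[simp] lemma blk_inr {i : Fin n} : blk n φ (Sum.inr i) = Bblock n φ i := rfl

lemma Ablock_injective : Function.Injective (Ablock n) := by
  intro i j h
  have : Sum.inr i ∈ Ablock n j := h ▸ (inr_mem_Ablock.mpr rfl)
  exact inr_mem_Ablock.mp this

lemma Bblock_injective : Function.Injective (Bblock n φ) := by
  intro i j h
  by_contra hij
  have : (Sum.inr i : MPoint n) ∈ Bblock n φ i := by
    rw [h]; exact inr_mem_Bblock.mpr hij
  simp at this

lemma exists_ne_ne (hn : 3 ≤ n) (a b : Fin n) : ∃ c : Fin n, c ≠ a ∧ c ≠ b := by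
  by_contra h
  push_neg at h
  have hsub : (Finset.univ : Finset (Fin n)) ⊆ {a, b} := by
    intro c _
    by_cases h1 : c = a
    · simp [h1]
    · simp [h c h1]
  have := Finset.card_le_card hsub
  have h2 : ({a, b} : Finset (Fin n)).card ≤ 2 :=
    (Finset.card_insert_le _ _).trans (by simp)
  simp at this
  omega

lemma Ablock_ne_Bblock (hn : 3 ≤ n) (i j : Fin n) : Ablock n i ≠ Bblock n φ j := by
  intro h
  obtain ⟨c, hc1, hc2⟩ := exists_ne_ne hn j i
  obtain ⟨d, hd1, hd2⟩ := exists_ne_ne hn j c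
  have hcm : (Sum.inr c : MPoint n) ∈ Ablock n i := by rw [h]; simpa using hc1
  have hdm : (Sum.inr d : MPoint n) ∈ Ablock n i := by rw [h]; simpa using hd1
  simp at hcm hdm
  exact hd2 (hdm.trans hcm.symm)

lemma blk_injective (hn : 3 ≤ n) : Function.Injective (blk n φ) := by
  intro x y h
  cases x with
  | inl i => cases y with
    | inl j => exact congrArg Sum.inl (Ablock_injective h)
    | inr j => exact absurd h (Ablock_ne_Bblock hn i j)
  | inr i => cases y with
    | inl j => exact absurd h.symm (Ablock_ne_Bblock hn j i)
    | inr j => exact congrArg Sum.inr (Bblock_injective h)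

lemma blk_mem_MBlocks (x : Fin n ⊕ Fin n) : blk n φ x ∈ MBlocks n φ := by
  cases x with
  | inl i => exact Or.inl ⟨i, rfl⟩
  | inr i => exact Or.inr ⟨i, rfl⟩

lemma MBlocks_eq_range : MBlocks n φ = Set.range (blk n φ) := by
  ext S
  constructor
  · rintro (⟨i, rfl⟩ | ⟨i, rfl⟩)
    exacts [⟨Sum.inl i, rfl⟩, ⟨Sum.inr i, rfl⟩]
  · rintro ⟨x, rfl⟩; exact blk_mem_MBlocks x


section NCard

lemma AA_inter (i j : Fin n) (hij : i ≠ j) :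
    Ablock n i ∩ Ablock n j = Sum.inl '' {k | k ≠ i ∧ k ≠ j} := by
  ext p; cases p <;> aesop

lemma BB_inter (i j : Fin n) (hij : i ≠ j) :
    Bblock n φ i ∩ Bblock n φ j = Sum.inr '' {k | k ≠ i ∧ k ≠ j} := by
  ext p
  cases p with
  | inl k =>
    simp only [Set.mem_inter_iff, inl_mem_Bblock, Set.mem_image, Set.mem_setOf_eq]
    constructor
    · rintro ⟨rfl, h⟩; exact absurd (φ.injective h) (by aesop)
    · rintro ⟨m, _, hm⟩; cases hm
  | inr k => aesop

lemma ncard_pair_compl (i j : Fin n) (hij : i ≠ j) :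
    ({k : Fin n | k ≠ i ∧ k ≠ j} : Set (Fin n)).ncard = n - 2 := by
  have h1 : ({k : Fin n | k ≠ i ∧ k ≠ j} : Set (Fin n)) = ↑(({i, j}ᶜ : Finset (Fin n))) := by
    ext k; simp [not_or]; tauto
  rw [h1, Set.ncard_coe_finset, Finset.card_compl, Finset.card_pair hij, Fintype.card_fin]

lemma ncard_AA (i j : Fin n) (hij : i ≠ j) :
    (Ablock n i ∩ Ablock n j).ncard = n - 2 := by
  rw [AA_inter i j hij, Set.ncard_image_of_injective _ Sum.inl_injective,
    ncard_pair_compl i j hij]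

lemma ncard_BB (i j : Fin n) (hij : i ≠ j) :
    (Bblock n φ i ∩ Bblock n φ j).ncard = n - 2 := by
  rw [BB_inter i j hij, Set.ncard_image_of_injective _ Sum.inr_injective,
    ncard_pair_compl i j hij]

lemma AB_inter (i j : Fin n) :
    Ablock n i ∩ Bblock n φ j =
      {p | (p = Sum.inl (φ j) ∧ φ j ≠ i) ∨ (p = Sum.inr i ∧ i ≠ j)} := by
  ext p; cases p <;> aesop

lemma ncard_AB (i j : Fin n) :
    (Ablock n i ∩ Bblock n φ j).ncard =
      (if φ j ≠ i then 1 else 0) + (if i ≠ j then 1 else 0) := by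
  rw [AB_inter]
  by_cases h1 : φ j ≠ i <;> by_cases h2 : i ≠ j
  · rw [if_pos h1, if_pos h2]
    have h : {p : MPoint n | (p = Sum.inl (φ j) ∧ φ j ≠ i) ∨ (p = Sum.inr i ∧ i ≠ j)}
        = {Sum.inl (φ j), Sum.inr i} := by ext p; aesop
    rw [h, Set.ncard_pair (by simp)]
  · rw [if_pos h1, if_neg h2]
    have h : {p : MPoint n | (p = Sum.inl (φ j) ∧ φ j ≠ i) ∨ (p = Sum.inr i ∧ i ≠ j)}
        = {Sum.inl (φ j)} := by ext p; aesop
    rw [h, Set.ncard_singleton]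
  · rw [if_neg h1, if_pos h2]
    have h : {p : MPoint n | (p = Sum.inl (φ j) ∧ φ j ≠ i) ∨ (p = Sum.inr i ∧ i ≠ j)}
        = {Sum.inr i} := by ext p; aesop
    rw [h, Set.ncard_singleton]
  · rw [if_neg h1, if_neg h2]
    have h : {p : MPoint n | (p = Sum.inl (φ j) ∧ φ j ≠ i) ∨ (p = Sum.inr i ∧ i ≠ j)}
        = ∅ := by ext p; aesop
    rw [h, Set.ncard_empty]

lemma ncard_AB_le (i j : Fin n) : (Ablock n i ∩ Bblock n φ j).ncard ≤ 2 := by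
  rw [ncard_AB]; split <;> split <;> omega

lemma two_le_ncard_blk (hn : 2 ≤ n) (x : Fin n ⊕ Fin n) : 2 ≤ (blk n φ x).ncard := by
  obtain ⟨i0, i1, hne⟩ : ∃ i0 i1 : Fin n, i0 ≠ i1 :=
    ⟨⟨0, by omega⟩, ⟨1, by omega⟩, by simp [Fin.ext_iff]⟩
  have key : ∀ x : Fin n ⊕ Fin n, ∃ a b, a ∈ blk n φ x ∧ b ∈ blk n φ x ∧ a ≠ b := by
    intro x
    cases x with
    | inl i =>
      obtain ⟨k, hk⟩ : ∃ k : Fin n, k ≠ i := by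
        by_cases h : i0 = i
        · exact ⟨i1, h ▸ hne.symm⟩
        · exact ⟨i0, h⟩
      exact ⟨Sum.inl k, Sum.inr i, by simpa using hk, by simp, by simp⟩
    | inr i =>
      obtain ⟨k, hk⟩ : ∃ k : Fin n, k ≠ i := by
        by_cases h : i0 = i
        · exact ⟨i1, h ▸ hne.symm⟩
        · exact ⟨i0, h⟩
      exact ⟨Sum.inr k, Sum.inl (φ i), by simpa using hk, by simp, by simp⟩
  obtain ⟨a, b, ha, hb, hab⟩ := key x
  have := Set.one_lt_ncard_iff (Set.toFinite _) |>.mpr ⟨a, b, ha, hb, hab⟩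
  omega

end NCard


section Core

lemma forced_inl (hn : 3 ≤ n) (t : Fin n) (p : MPoint n)
    (h : ∀ m, m ≠ t → p ∈ Ablock n m) : p = Sum.inl t := by
  cases p with
  | inl k =>
    rcases eq_or_ne k t with rfl | hkt
    · rfl
    · have := h k hkt
      simp at this
  | inr k =>
    obtain ⟨c, hc1, hc2⟩ := exists_ne_ne hn t k
    have := h c hc1
    simp at this
    exact absurd this.symm hc2

lemma forced_inr (hn : 3 ≤ n) (t : Fin n) (p : MPoint n)
    (h : ∀ m, m ≠ t → p ∈ Bblock n ψ m) : p = Sum.inr t := by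
  cases p with
  | inl k =>
    obtain ⟨c, hc1, hc2⟩ := exists_ne_ne hn t k
    obtain ⟨d, hd1, hd2⟩ := exists_ne_ne hn t c
    have h1 := h c hc1
    have h2 := h d hd1
    simp at h1 h2
    exact absurd (ψ.injective (h1.symm.trans h2)) (Ne.symm hd2)
  | inr k =>
    rcases eq_or_ne k t with rfl | hkt
    · rfl
    · have := h k hkt
      simp at this

lemma exists_blockEquiv (hn : 3 ≤ n) (f : MPoint n ≃ MPoint n)
    (hf : ∀ S ∈ MBlocks n φ, ⇑f '' S ∈ MBlocks n ψ) :
    ∃ g : (Fin n ⊕ Fin n) ≃ (Fin n ⊕ Fin n), ∀ x, blk n ψ (g x) = ⇑f '' blk n φ x := by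
  have h1 : ∀ x, ∃ y, blk n ψ y = ⇑f '' blk n φ x := by
    intro x
    have := hf (blk n φ x) (blk_mem_MBlocks x)
    rw [MBlocks_eq_range] at this
    exact this
  choose g0 hg0 using h1
  have hinj : Function.Injective g0 := by
    intro x y hxy
    have : ⇑f '' blk n φ x = ⇑f '' blk n φ y := by rw [← hg0, ← hg0, hxy]
    exact blk_injective hn ((Set.image_injective.mpr f.injective) this)
  exact ⟨Equiv.ofBijective g0 (Finite.injective_iff_bijective.mp hinj), hg0⟩

lemma hpres_of (f : MPoint n ≃ MPoint n) (g : (Fin n ⊕ Fin n) ≃ (Fin n ⊕ Fin n))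
    (hg : ∀ x, blk n ψ (g x) = ⇑f '' blk n φ x) (x y : Fin n ⊕ Fin n) :
    (blk n ψ (g x) ∩ blk n ψ (g y)).ncard = (blk n φ x ∩ blk n φ y).ncard := by
  rw [hg, hg, ← Set.image_inter f.injective, Set.ncard_image_of_injective _ f.injective]

lemma ncard_cross_le (x y : Fin n ⊕ Fin n) (h : x.isLeft ≠ y.isLeft) :
    (blk n φ x ∩ blk n φ y).ncard ≤ 2 := by
  cases x with
  | inl i =>
    cases y with
    | inl j => simp at h
    | inr j => exact ncard_AB_le i j
  | inr i =>
    cases y with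
    | inl j =>
      rw [blk_inr, blk_inl, Set.inter_comm]
      exact ncard_AB_le j i
    | inr j => simp at h

theorem isConj_of_MIso_of_five (hn : 5 ≤ n) (h : MIso n φ ψ) : IsConj φ ψ := by
  have hn3 : 3 ≤ n := by omega
  obtain ⟨f, hf⟩ := h
  obtain ⟨g, hg⟩ := exists_blockEquiv hn3 f (fun S hS => (hf S).mp hS)
  have hpres := hpres_of f g hg
  -- all images of inl's lie on the same side
  have hside : ∀ i j : Fin n, (g (Sum.inl i)).isLeft = (g (Sum.inl j)).isLeft := by
    intro i j
    rcases eq_or_ne i j with rfl | hij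
    · rfl
    by_contra hne
    have h1 := hpres (Sum.inl i) (Sum.inl j)
    have h2 := ncard_cross_le (φ := ψ) _ _ hne
    rw [h1] at h2
    have h3 : (blk n φ (Sum.inl i) ∩ blk n φ (Sum.inl j)).ncard = n - 2 :=
      ncard_AA i j hij
    omega
  have i0 : Fin n := ⟨0, by omega⟩
  -- injectivity helpers
  have ginj := g.injective
  cases hl : (g (Sum.inl i0)).isLeft with
  | true =>
    have hA : ∀ i, ∃ k, g (Sum.inl i) = Sum.inl k := by
      intro i
      have := (hside i i0).trans hl
      exact Sum.isLeft_iff.mp this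
    choose α hα using hA
    have hαinj : Function.Injective α := by
      intro i j hij
      have : g (Sum.inl i) = g (Sum.inl j) := by rw [hα, hα, hij]
      simpa using ginj this
    have hαbij : Function.Bijective α := Finite.injective_iff_bijective.mp hαinj
    have hB : ∀ j, ∃ k, g (Sum.inr j) = Sum.inr k := by
      intro j
      cases hgj : g (Sum.inr j) with
      | inl k =>
        obtain ⟨i, rfl⟩ := hαbij.2 k
        exact absurd (ginj (hgj.trans (hα i).symm)) (by simp)
      | inr k => exact ⟨k, rfl⟩
    choose β hβ using hB
    have hβinj : Function.Injective β := by
      intro i j hij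
      have : g (Sum.inr i) = g (Sum.inr j) := by rw [hβ, hβ, hij]
      simpa using ginj this
    have hβbij : Function.Bijective β := Finite.injective_iff_bijective.mp hβinj
    -- point images
    have hfa : ∀ j, f (Sum.inl j) = Sum.inl (α j) := by
      intro j
      apply forced_inl hn3
      intro m hm
      obtain ⟨i, rfl⟩ := hαbij.2 m
      have hij : i ≠ j := fun hc => hm (by rw [hc])
      have : f (Sum.inl j) ∈ ⇑f '' blk n φ (Sum.inl i) :=
        Set.mem_image_of_mem f (by simpa using fun hc => hij hc.symm)
      rw [← hg, hα] at this
      simpa using this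
    have hfb : ∀ j, f (Sum.inr j) = Sum.inr (β j) := by
      intro j
      apply forced_inr hn3
      intro m hm
      obtain ⟨i, rfl⟩ := hβbij.2 m
      have hij : i ≠ j := fun hc => hm (by rw [hc])
      have : f (Sum.inr j) ∈ ⇑f '' blk n φ (Sum.inr i) :=
        Set.mem_image_of_mem f (by simpa using fun hc => hij hc.symm)
      rw [← hg, hβ] at this
      simpa using this
    have hβα : ∀ j, β j = α j := by
      intro j
      have : f (Sum.inr j) ∈ ⇑f '' blk n φ (Sum.inl j) :=
        Set.mem_image_of_mem f (by simp)
      rw [← hg, hα] at this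
      rw [hfb] at this
      simpa using this
    have key : ∀ i, α (φ i) = ψ (α i) := by
      intro i
      have : f (Sum.inl (φ i)) ∈ ⇑f '' blk n φ (Sum.inr i) :=
        Set.mem_image_of_mem f (by simp)
      rw [← hg, hβ] at this
      rw [hfa] at this
      simp at this
      rw [this, hβα]
    rw [isConj_iff]
    refine ⟨Equiv.ofBijective α hαbij, ?_⟩
    have hmul : (Equiv.ofBijective α hαbij) * φ = ψ * (Equiv.ofBijective α hαbij) := by
      ext i
      simp only [Equiv.Perm.mul_apply, Equiv.ofBijective_apply]
      rw [key i]
    rw [hmul, mul_inv_cancel_right]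
  | false =>
    have hA : ∀ i, ∃ k, g (Sum.inl i) = Sum.inr k := by
      intro i
      have := (hside i i0).trans hl
      exact Sum.isRight_iff.mp (by simp [Sum.isRight_iff] at this ⊢; cases hx : g (Sum.inl i) <;> simp_all)
    choose α hα using hA
    have hαinj : Function.Injective α := by
      intro i j hij
      have : g (Sum.inl i) = g (Sum.inl j) := by rw [hα, hα, hij]
      simpa using ginj this
    have hαbij : Function.Bijective α := Finite.injective_iff_bijective.mp hαinj
    have hB : ∀ j, ∃ k, g (Sum.inr j) = Sum.inl k := by
      intro j
      cases hgj : g (Sum.inr j) with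
      | inr k =>
        obtain ⟨i, rfl⟩ := hαbij.2 k
        exact absurd (ginj (hgj.trans (hα i).symm)) (by simp)
      | inl k => exact ⟨k, rfl⟩
    choose β hβ using hB
    have hβinj : Function.Injective β := by
      intro i j hij
      have : g (Sum.inr i) = g (Sum.inr j) := by rw [hβ, hβ, hij]
      simpa using ginj this
    have hβbij : Function.Bijective β := Finite.injective_iff_bijective.mp hβinj
    have hfa : ∀ j, f (Sum.inl j) = Sum.inr (α j) := by
      intro j
      apply forced_inr hn3
      intro m hm
      obtain ⟨i, rfl⟩ := hαbij.2 m
      have hij : i ≠ j := fun hc => hm (by rw [hc])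
      have : f (Sum.inl j) ∈ ⇑f '' blk n φ (Sum.inl i) :=
        Set.mem_image_of_mem f (by simpa using fun hc => hij hc.symm)
      rw [← hg, hα] at this
      simpa using this
    have hfb : ∀ j, f (Sum.inr j) = Sum.inl (β j) := by
      intro j
      apply forced_inl hn3
      intro m hm
      obtain ⟨i, rfl⟩ := hβbij.2 m
      have hij : i ≠ j := fun hc => hm (by rw [hc])
      have : f (Sum.inr j) ∈ ⇑f '' blk n φ (Sum.inr i) :=
        Set.mem_image_of_mem f (by simpa using fun hc => hij hc.symm)
      rw [← hg, hβ] at this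
      simpa using this
    have hβα : ∀ j, β j = ψ (α j) := by
      intro j
      have : f (Sum.inr j) ∈ ⇑f '' blk n φ (Sum.inl j) :=
        Set.mem_image_of_mem f (by simp)
      rw [← hg, hα] at this
      rw [hfb] at this
      simpa using this
    have key : ∀ i, α (φ i) = ψ (α i) := by
      intro i
      have : f (Sum.inl (φ i)) ∈ ⇑f '' blk n φ (Sum.inr i) :=
        Set.mem_image_of_mem f (by simp)
      rw [← hg, hβ] at this
      rw [hfa] at this
      simp at this
      rw [this, hβα]
    rw [isConj_iff]
    refine ⟨Equiv.ofBijective α hαbij, ?_⟩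
    have hmul : (Equiv.ofBijective α hαbij) * φ = ψ * (Equiv.ofBijective α hαbij) := by
      ext i
      simp only [Equiv.Perm.mul_apply, Equiv.ofBijective_apply]
      rw [key i]
    rw [hmul, mul_inv_cancel_right]

end Core


section Four

def zeroB (φ : Equiv.Perm (Fin n)) : Fin n ⊕ Fin n → Fin n ⊕ Fin n → Bool
  | .inl i, .inr j => decide (i = j) && decide (φ j = i)
  | .inr j, .inl i => decide (i = j) && decide (φ j = i)
  | _, _ => false

def edgeB (φ : Equiv.Perm (Fin n)) : Fin n ⊕ Fin n → Fin n ⊕ Fin n → Bool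
  | .inl i, .inr j => (decide (i = j) && decide (φ j ≠ i)) || (decide (i ≠ j) && decide (φ j = i))
  | .inr j, .inl i => (decide (i = j) && decide (φ j ≠ i)) || (decide (i ≠ j) && decide (φ j = i))
  | _, _ => false

def cfix (n : ℕ) (φ : Equiv.Perm (Fin n)) : ℕ :=
  (Finset.univ.filter fun p : (Fin n ⊕ Fin n) × (Fin n ⊕ Fin n) => zeroB φ p.1 p.2).card

def cwalk (n : ℕ) (φ : Equiv.Perm (Fin n)) : ℕ :=
  (Finset.univ.filter fun p : (Fin n ⊕ Fin n) × (Fin n ⊕ Fin n) =>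
    p.1 ≠ p.2 ∧ ∃ z, edgeB φ p.1 z ∧ edgeB φ z p.2).card

lemma zero_char (hn : 4 ≤ n) (x y : Fin n ⊕ Fin n) :
    zeroB φ x y = true ↔ (blk n φ x ∩ blk n φ y).ncard = 0 := by
  have hself : ∀ z, 2 ≤ (blk n φ z).ncard := two_le_ncard_blk (by omega)
  cases x with
  | inl i =>
    cases y with
    | inl j =>
      simp only [zeroB]
      rcases eq_or_ne i j with rfl | hij
      · have := hself (Sum.inl i)
        rw [blk_inl] at this
        simp only [blk_inl, Set.inter_self, Bool.false_eq_true, false_iff]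
        omega
      · rw [blk_inl, blk_inl, ncard_AA i j hij]
        simp
        omega
    | inr j =>
      rw [blk_inl, blk_inr, ncard_AB]
      simp only [zeroB, Bool.and_eq_true, decide_eq_true_eq]
      constructor
      · rintro ⟨rfl, h2⟩
        simp [h2]
      · intro h
        by_cases h1 : φ j ≠ i <;> by_cases h2 : i ≠ j <;>
          simp [h1, h2] at h ⊢ <;> tauto
  | inr i =>
    cases y with
    | inl j =>
      rw [blk_inr, blk_inl, Set.inter_comm, ncard_AB]
      simp only [zeroB, Bool.and_eq_true, decide_eq_true_eq]
      constructor
      · rintro ⟨rfl, h2⟩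
        simp [h2]
      · intro h
        by_cases h1 : φ i ≠ j <;> by_cases h2 : j ≠ i <;>
          simp [h1, h2] at h ⊢ <;> tauto
    | inr j =>
      simp only [zeroB]
      rcases eq_or_ne i j with rfl | hij
      · have := hself (Sum.inr i)
        rw [blk_inr] at this
        simp only [blk_inr, Set.inter_self, Bool.false_eq_true, false_iff]
        omega
      · rw [blk_inr, blk_inr, ncard_BB i j hij]
        simp
        omega

lemma edge_char (hn : 4 ≤ n) (x y : Fin n ⊕ Fin n) :
    edgeB φ x y = true ↔ (blk n φ x ∩ blk n φ y).ncard = 1 := by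
  have hself : ∀ z, 2 ≤ (blk n φ z).ncard := two_le_ncard_blk (by omega)
  cases x with
  | inl i =>
    cases y with
    | inl j =>
      simp only [edgeB]
      rcases eq_or_ne i j with rfl | hij
      · have := hself (Sum.inl i)
        rw [blk_inl] at this
        simp only [blk_inl, Set.inter_self, Bool.false_eq_true, false_iff]
        omega
      · rw [blk_inl, blk_inl, ncard_AA i j hij]
        simp
        omega
    | inr j =>
      rw [blk_inl, blk_inr, ncard_AB]
      simp only [edgeB, Bool.or_eq_true, Bool.and_eq_true, decide_eq_true_eq]
      by_cases h1 : φ j ≠ i <;> by_cases h2 : i ≠ j <;> simp [h1, h2] <;> tauto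
  | inr i =>
    cases y with
    | inl j =>
      rw [blk_inr, blk_inl, Set.inter_comm, ncard_AB]
      simp only [edgeB, Bool.or_eq_true, Bool.and_eq_true, decide_eq_true_eq]
      by_cases h1 : φ i ≠ j <;> by_cases h2 : j ≠ i <;> simp [h1, h2] <;> tauto
    | inr j =>
      simp only [edgeB]
      rcases eq_or_ne i j with rfl | hij
      · have := hself (Sum.inr i)
        rw [blk_inr] at this
        simp only [blk_inr, Set.inter_self, Bool.false_eq_true, false_iff]
        omega
      · rw [blk_inr, blk_inr, ncard_BB i j hij]
        simp
        omega

lemma counts_eq_of_MIso (hn : 4 ≤ n) (h : MIso n φ ψ) :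
    cfix n φ = cfix n ψ ∧ cwalk n φ = cwalk n ψ := by
  obtain ⟨f, hf⟩ := h
  obtain ⟨g, hg⟩ := exists_blockEquiv (by omega) f (fun S hS => (hf S).mp hS)
  have hpres := hpres_of f g hg
  have hzero : ∀ x y, zeroB ψ (g x) (g y) = zeroB φ x y := by
    intro x y
    rw [Bool.eq_iff_iff, zero_char hn, zero_char hn, hpres]
  have hedge : ∀ x y, edgeB ψ (g x) (g y) = edgeB φ x y := by
    intro x y
    rw [Bool.eq_iff_iff, edge_char hn, edge_char hn, hpres]
  constructor
  · apply Finset.card_bij (fun p _ => (g p.1, g p.2))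
    · intro p hp
      simp only [Finset.mem_filter, Finset.mem_univ, true_and] at hp ⊢
      rw [hzero]
      exact hp
    · intro p _ q _ hpq
      simp only [Prod.mk.injEq, EmbeddingLike.apply_eq_iff_eq] at hpq
      exact Prod.ext hpq.1 hpq.2
    · intro p hp
      refine ⟨(g.symm p.1, g.symm p.2), ?_, by simp⟩
      simp only [Finset.mem_filter, Finset.mem_univ, true_and] at hp ⊢
      rw [← hzero (g.symm p.1) (g.symm p.2)]
      simpa using hp
  · apply Finset.card_bij (fun p _ => (g p.1, g p.2))
    · intro p hp
      simp only [Finset.mem_filter, Finset.mem_univ, true_and] at hp ⊢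
      obtain ⟨hne, z, hz1, hz2⟩ := hp
      refine ⟨by simpa using hne, g z, ?_, ?_⟩
      · rw [hedge]; exact hz1
      · rw [hedge]; exact hz2
    · intro p _ q _ hpq
      simp only [Prod.mk.injEq, EmbeddingLike.apply_eq_iff_eq] at hpq
      exact Prod.ext hpq.1 hpq.2
    · intro p hp
      refine ⟨(g.symm p.1, g.symm p.2), ?_, by simp⟩
      simp only [Finset.mem_filter, Finset.mem_univ, true_and] at hp ⊢
      obtain ⟨hne, z, hz1, hz2⟩ := hp
      refine ⟨by simpa using g.symm.injective.ne hne, g.symm z, ?_, ?_⟩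
      · rw [← hedge (g.symm p.1) (g.symm z)]; simpa using hz1
      · rw [← hedge (g.symm z) (g.symm p.2)]; simpa using hz2

set_option maxHeartbeats 4000000 in
set_option maxRecDepth 100000 in
lemma dec4 : ∀ φ ψ : Equiv.Perm (Fin 4), cfix 4 φ = cfix 4 ψ → cwalk 4 φ = cwalk 4 ψ →
    ∃ σ : Equiv.Perm (Fin 4), σ * φ * σ⁻¹ = ψ := by decide

theorem isConj_of_MIso (hn : 4 ≤ n) (h : MIso n φ ψ) : IsConj φ ψ := by
  rcases eq_or_lt_of_le hn with heq | hlt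
  · subst heq
    obtain ⟨h1, h2⟩ := counts_eq_of_MIso (le_refl 4) h
    rw [isConj_iff]
    exact dec4 φ ψ h1 h2
  · exact isConj_of_MIso_of_five hlt h

end Four


section Converse

lemma image_Ablock (σ : Equiv.Perm (Fin n)) (i : Fin n) :
    ⇑(Equiv.sumCongr σ σ) '' Ablock n i = Ablock n (σ i) := by
  ext p
  rw [Set.mem_image]
  constructor
  · rintro ⟨q, hq, rfl⟩
    cases q with
    | inl k => simp at hq ⊢; exact hq
    | inr k => simp at hq ⊢; exact hq
  · intro hp
    cases p with
    | inl k =>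
      simp at hp
      exact ⟨Sum.inl (σ.symm k), by simpa [Equiv.symm_apply_eq] using hp, by simp⟩
    | inr k =>
      simp at hp
      exact ⟨Sum.inr i, by simp, by simp [hp]⟩

lemma image_Bblock (σ : Equiv.Perm (Fin n)) (hσ : ∀ i, ψ (σ i) = σ (φ i)) (i : Fin n) :
    ⇑(Equiv.sumCongr σ σ) '' Bblock n φ i = Bblock n ψ (σ i) := by
  ext p
  rw [Set.mem_image]
  constructor
  · rintro ⟨q, hq, rfl⟩
    cases q with
    | inl k => simp at hq ⊢; rw [hq, hσ]
    | inr k => simp at hq ⊢; exact hq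
  · intro hp
    cases p with
    | inl k =>
      simp at hp
      exact ⟨Sum.inl (φ i), by simp, by simp [hp, hσ]⟩
    | inr k =>
      simp at hp
      exact ⟨Sum.inr (σ.symm k), by simpa [Equiv.symm_apply_eq] using hp, by simp⟩

lemma map_mem_MBlocks (σ : Equiv.Perm (Fin n)) (hσ : ∀ i, ψ (σ i) = σ (φ i))
    (S : Set (MPoint n)) (hS : S ∈ MBlocks n φ) :
    ⇑(Equiv.sumCongr σ σ) '' S ∈ MBlocks n ψ := by
  rcases hS with ⟨i, rfl⟩ | ⟨i, rfl⟩
  · exact Or.inl ⟨σ i, (image_Ablock σ i).symm⟩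
  · exact Or.inr ⟨σ i, (image_Bblock σ hσ i).symm⟩

theorem MIso_of_isConj (h : IsConj φ ψ) : MIso n φ ψ := by
  rw [isConj_iff] at h
  obtain ⟨σ, hσ⟩ := h
  have hcomm : ∀ i, ψ (σ i) = σ (φ i) := by
    intro i
    rw [← hσ]
    simp [Equiv.Perm.mul_apply]
  refine ⟨Equiv.sumCongr σ σ, fun S => ⟨map_mem_MBlocks σ hcomm S, fun hS => ?_⟩⟩
  have hcomm' : ∀ i, φ (σ⁻¹ i) = σ⁻¹ (ψ i) := by
    intro i
    have := hcomm (σ⁻¹ i)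
    rw [show σ (σ⁻¹ i) = i by simp] at this
    rw [this]
    simp
  have := map_mem_MBlocks (ψ := φ) σ⁻¹ hcomm' _ hS
  have heq : ⇑(Equiv.sumCongr σ⁻¹ σ⁻¹) '' (⇑(Equiv.sumCongr σ σ) '' S) = S := by
    rw [← Set.image_comp]
    have : ⇑(Equiv.sumCongr σ⁻¹ σ⁻¹) ∘ ⇑(Equiv.sumCongr σ σ) = id := by
      funext p
      cases p <;> simp
    rw [this, Set.image_id]
  rwa [heq] at this

end Converse

end MPair

section Counting

open Equiv

lemma partition_surjective {α : Type*} [Fintype α] [DecidableEq α] :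
    Function.Surjective (Equiv.Perm.partition : Equiv.Perm α → (Fintype.card α).Partition) := by
  intro p
  set m : Multiset ℕ := p.parts.filter (fun a => 2 ≤ a) with hm
  have hm2 : ∀ a ∈ m, 2 ≤ a := fun a ha => (Multiset.mem_filter.mp ha).2
  have hrest : p.parts.filter (fun a => ¬ 2 ≤ a) =
      Multiset.replicate (Multiset.card (p.parts.filter (fun a => ¬ 2 ≤ a))) 1 := by
    rw [Multiset.eq_replicate_card]
    intro b hb
    have h1 := (Multiset.mem_filter.mp hb).2
    have h2 := p.parts_pos (Multiset.mem_filter.mp hb).1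
    omega
  have hsplit : m + p.parts.filter (fun a => ¬ 2 ≤ a) = p.parts :=
    Multiset.filter_add_not _ _
  have hcard : (p.parts.filter (fun a => ¬ 2 ≤ a)).sum =
      Multiset.card (p.parts.filter (fun a => ¬ 2 ≤ a)) := by
    conv_lhs => rw [hrest]
    rw [Multiset.sum_replicate, smul_eq_mul, mul_one]
  have hsum : m.sum + Multiset.card (p.parts.filter (fun a => ¬ 2 ≤ a)) = Fintype.card α := by
    have := congrArg Multiset.sum hsplit
    rw [Multiset.sum_add, p.parts_sum, hcard] at this
    exact this
  have hms : m.sum ≤ Fintype.card α := by omega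
  obtain ⟨g, hg⟩ := (Equiv.Perm.exists_with_cycleType_iff α).mpr ⟨hms, hm2⟩
  refine ⟨g, ?_⟩
  rw [Nat.Partition.ext_iff, Equiv.Perm.parts_partition, ← Equiv.Perm.sum_cycleType, hg]
  rw [← hsplit]
  congr 1
  rw [hrest]
  congr 1
  omega

end Counting

/-- The number of isomorphism classes of Möbius n-pairs equals the number p(n) of
partitions of n. -/
theorem stmt14 (n : ℕ) (hn : 4 ≤ n) :
    {C : Set (Equiv.Perm (Fin n)) | ∃ φ : Equiv.Perm (Fin n),
        C = {ψ | MIso n φ ψ}}.ncard = Fintype.card (Nat.Partition n) := by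
  classical
  have hiff : ∀ φ ψ : Equiv.Perm (Fin n), MIso n φ ψ ↔ IsConj φ ψ :=
    fun φ ψ => ⟨MPair.isConj_of_MIso hn, MPair.MIso_of_isConj⟩
  have hK : {C : Set (Equiv.Perm (Fin n)) | ∃ φ : Equiv.Perm (Fin n), C = {ψ | MIso n φ ψ}} =
      Set.range (fun p : (Fintype.card (Fin n)).Partition =>
        {ψ : Equiv.Perm (Fin n) | ψ.partition = p}) := by
    ext C
    constructor
    · rintro ⟨φ, rfl⟩
      refine ⟨φ.partition, ?_⟩
      ext ψ
      simp only [Set.mem_setOf_eq]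
      rw [eq_comm, ← Equiv.Perm.partition_eq_of_isConj, ← hiff]
    · rintro ⟨p, rfl⟩
      obtain ⟨φ, hφ⟩ := partition_surjective p
      refine ⟨φ, ?_⟩
      ext ψ
      simp only [Set.mem_setOf_eq]
      rw [hiff, Equiv.Perm.partition_eq_of_isConj, hφ, eq_comm]
  rw [hK]
  have hinj : Function.Injective (fun p : (Fintype.card (Fin n)).Partition =>
      {ψ : Equiv.Perm (Fin n) | ψ.partition = p}) := by
    intro p q hpq
    obtain ⟨φ, hφ⟩ := partition_surjective p
    replace hpq : {ψ : Equiv.Perm (Fin n) | ψ.partition = p} =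
        {ψ : Equiv.Perm (Fin n) | ψ.partition = q} := hpq
    have h1 : φ ∈ {ψ : Equiv.Perm (Fin n) | ψ.partition = p} := hφ
    rw [hpq] at h1
    exact hφ.symm.trans h1
  rw [← Nat.card_coe_set_eq, Nat.card_range_of_injective hinj, Nat.card_eq_fintype_card]
  exact Fintype.card_congr (Equiv.cast (congrArg Nat.Partition (Fintype.card_fin n)))
end

section
/- Let n ≥ 3 and let φ be a permutation of I = {1,…,n}. The map g_0 defined on the points of 𝔐_{(n,φ)} by g_0(a_i) = b_{φ⁻¹(i)} and g_0(b_i) = a_i for all i ∈ I is an automorphism of 𝔐_{(n,φ)} which maps each A-block A_i onto the B-block B_{φ⁻¹(i)} and each B-block B_i onto the A-block A_i; in particular it interchanges the simplices S_A and S_B. -/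
/-- The map g₀ : a_i ↦ b_{φ⁻¹(i)}, b_i ↦ a_i is an automorphism of 𝔐_{(n,φ)} sending
A_i to B_{φ⁻¹(i)} and B_i to A_i; in particular it interchanges the simplices S_A and S_B. -/
theorem stmt17 (n : ℕ) (hn : 3 ≤ n) (φ : Equiv.Perm (Fin n))
    (g : MPoint n ≃ MPoint n)
    (hga : ∀ i, g (Sum.inl i) = Sum.inr (φ⁻¹ i))
    (hgb : ∀ i, g (Sum.inr i) = Sum.inl i) :
    (∀ S : Set (MPoint n), S ∈ MBlocks n φ ↔ ⇑g '' S ∈ MBlocks n φ) ∧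
    (∀ i, ⇑g '' Ablock n i = Bblock n φ (φ⁻¹ i)) ∧
    (∀ i, ⇑g '' Bblock n φ i = Ablock n i) ∧
    ⇑g '' Set.range Sum.inl = Set.range Sum.inr ∧
    ⇑g '' Set.range Sum.inr = Set.range Sum.inl ∧
    (fun l => ⇑g '' l) '' ABlocks n = BBlocks n φ ∧
    (fun l => ⇑g '' l) '' BBlocks n φ = ABlocks n := by
  have hA : ∀ i, ⇑g '' Ablock n i = Bblock n φ (φ⁻¹ i) := by
    intro i
    ext x
    simp only [Ablock, Bblock, Set.image_union, Set.image_singleton, Set.mem_union,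
      Set.mem_image, Set.mem_setOf_eq, Set.mem_singleton_iff, hgb,
      (show ∀ x, φ (φ⁻¹ x) = x from fun x => φ.apply_symm_apply x)]
    constructor
    · rintro (⟨y, ⟨j, hj, rfl⟩, rfl⟩ | rfl)
      · exact Or.inl ⟨φ⁻¹ j, fun h => hj (φ⁻¹.injective h), (hga j).symm ▸ rfl⟩
      · exact Or.inr rfl
    · rintro (⟨j, hj, rfl⟩ | rfl)
      · exact Or.inl ⟨Sum.inl (φ j), ⟨φ j, fun h => hj (by rw [← h]; simp), rfl⟩,
          by rw [hga]; simp⟩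
      · exact Or.inr rfl
  have hB : ∀ i, ⇑g '' Bblock n φ i = Ablock n i := by
    intro i
    ext x
    simp only [Ablock, Bblock, Set.image_union, Set.image_singleton, Set.mem_union,
      Set.mem_image, Set.mem_setOf_eq, Set.mem_singleton_iff, hga,
      (show ∀ x, φ⁻¹ (φ x) = x from fun x => φ.symm_apply_apply x)]
    constructor
    · rintro (⟨y, ⟨j, hj, rfl⟩, rfl⟩ | rfl)
      · exact Or.inl ⟨j, hj, (hgb j).symm ▸ rfl⟩
      · exact Or.inr rfl
    · rintro (⟨j, hj, rfl⟩ | rfl)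
      · exact Or.inl ⟨Sum.inr j, ⟨j, hj, rfl⟩, hgb j⟩
      · exact Or.inr rfl
  have hAB : (fun l => ⇑g '' l) '' ABlocks n = BBlocks n φ := by
    ext S
    simp only [ABlocks, BBlocks, Set.mem_image, Set.mem_range]
    constructor
    · rintro ⟨T, ⟨i, rfl⟩, rfl⟩; exact ⟨φ⁻¹ i, (hA i).symm⟩
    · rintro ⟨i, rfl⟩; exact ⟨Ablock n (φ i), ⟨φ i, rfl⟩, by rw [hA]; simp⟩
  have hBA : (fun l => ⇑g '' l) '' BBlocks n φ = ABlocks n := by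
    ext S
    simp only [ABlocks, BBlocks, Set.mem_image, Set.mem_range]
    constructor
    · rintro ⟨T, ⟨i, rfl⟩, rfl⟩; exact ⟨i, (hB i).symm⟩
    · rintro ⟨i, rfl⟩; exact ⟨Bblock n φ i, ⟨i, rfl⟩, hB i⟩
  have hinj := Set.image_injective.mpr g.injective
  refine ⟨?_, hA, hB, ?_, ?_, hAB, hBA⟩
  · intro S
    constructor
    · rintro (⟨i, rfl⟩ | ⟨i, rfl⟩)
      · exact Or.inr ⟨φ⁻¹ i, (hA i).symm⟩
      · exact Or.inl ⟨i, (hB i).symm⟩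
    · rintro (⟨i, hi⟩ | ⟨i, hi⟩)
      · have : ⇑g '' S = ⇑g '' Bblock n φ i := by rw [hB, hi]
        exact Or.inr ⟨i, (hinj this).symm ▸ rfl⟩
      · have : ⇑g '' S = ⇑g '' Ablock n (φ i) := by rw [hA]; simp [hi]
        exact Or.inl ⟨φ i, (hinj this).symm ▸ rfl⟩
  · ext x
    simp only [Set.mem_image, Set.mem_range]
    constructor
    · rintro ⟨y, ⟨j, rfl⟩, rfl⟩; exact ⟨φ⁻¹ j, (hga j).symm⟩
    · rintro ⟨j, rfl⟩; exact ⟨Sum.inl (φ j), ⟨φ j, rfl⟩, by rw [hga]; simp⟩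
  · ext x
    simp only [Set.mem_image, Set.mem_range]
    constructor
    · rintro ⟨y, ⟨j, rfl⟩, rfl⟩; exact ⟨j, (hgb j).symm⟩
    · rintro ⟨j, rfl⟩; exact ⟨Sum.inr j, ⟨j, rfl⟩, hgb j⟩
end
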